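/- Let n ≥ 1 and let f be any coloring satisfying the bmf boundary conditions. Then 2^{-n}(1,1,0) is the unique grid vertex lying on the boundary of [0,1]^3 that is adjacent to cubelets of color 1, of color 2, and of color 3 under f. -/
import Mathlib


/-- A cubelet index i is adjacent to a grid coordinate a (both along one axis)
iff the grid coordinate is one of the two faces of the cubelet: a = i or a = i + 1.
(The grid vertex 2^{-n}(a,b,c) is a corner of cubelet K_{ijk} iff this holds on each axis.) -/
def AdjIdx (a i : ℕ) : Prop := a = i ∨ a = i + 1

/-- A cubelet K_{ijk} is exterior if some index equals 0 or 2^n − 1. -/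
def ExteriorCubelet (n : ℕ) (i j k : Fin (2 ^ n)) : Prop :=
  i.val = 0 ∨ j.val = 0 ∨ k.val = 0 ∨
    i.val = 2 ^ n - 1 ∨ j.val = 2 ^ n - 1 ∨ k.val = 2 ^ n - 1

/-- The bmf boundary conditions on a coloring f. -/
def BMFBoundary (n : ℕ) (f : Fin (2 ^ n) → Fin (2 ^ n) → Fin (2 ^ n) → Fin 4) : Prop :=
  ∀ i j k : Fin (2 ^ n),
    (i.val = 0 → f i j k = 1) ∧
    (j.val = 0 → 0 < i.val → f i j k = 2) ∧
    (k.val = 0 → 0 < i.val → 0 < j.val → f i j k = 3) ∧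
    (ExteriorCubelet n i j k → 0 < i.val → 0 < j.val → 0 < k.val → f i j k = 0)

/-- The grid vertex 2^{-n}(a,b,c) has a cubelet of color `col` adjacent to it. -/
def HasColorAt (n : ℕ) (f : Fin (2 ^ n) → Fin (2 ^ n) → Fin (2 ^ n) → Fin 4)
    (a b c : ℕ) (col : Fin 4) : Prop :=
  ∃ i j k : Fin (2 ^ n), AdjIdx a i.val ∧ AdjIdx b j.val ∧ AdjIdx c k.val ∧ f i j k = col
/-- The grid vertex 2^{-n}(a,b,c), with 0 ≤ a,b,c ≤ 2^n, lies on the boundary of [0,1]³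
iff some coordinate equals 0 or 1, i.e. some index equals 0 or 2^n. -/
def OnBoundary (n : ℕ) (a b c : ℕ) : Prop :=
  a = 0 ∨ a = 2 ^ n ∨ b = 0 ∨ b = 2 ^ n ∨ c = 0 ∨ c = 2 ^ n


lemma ext_of_boundary (n a b c : ℕ) (i j k : Fin (2 ^ n)) (hi : AdjIdx a i.val)
    (hj : AdjIdx b j.val) (hk : AdjIdx c k.val) (hb : OnBoundary n a b c) :
    ExteriorCubelet n i j k := by
  have h1 := i.isLt; have h2 := j.isLt; have h3 := k.isLt
  unfold AdjIdx at hi hj hk; unfold OnBoundary at hb; unfold ExteriorCubelet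
  omega

lemma classify (n : ℕ) (f : Fin (2 ^ n) → Fin (2 ^ n) → Fin (2 ^ n) → Fin 4)
    (hf : BMFBoundary n f) (i j k : Fin (2 ^ n)) (hext : ExteriorCubelet n i j k) :
    (f i j k = 1 → i.val = 0) ∧ (f i j k = 2 → 0 < i.val ∧ j.val = 0) ∧
    (f i j k = 3 → 0 < i.val ∧ 0 < j.val ∧ k.val = 0) := by
  obtain ⟨c1, c2, c3, c0⟩ := hf i j k
  rcases Nat.eq_zero_or_pos i.val with hi | hi
  · have h := c1 hi
    refine ⟨fun _ => hi, fun h2 => ?_, fun h2 => ?_⟩ <;>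
      (rw [h] at h2; exact absurd h2 (by decide))
  rcases Nat.eq_zero_or_pos j.val with hj | hj
  · have h := c2 hj hi
    refine ⟨fun h2 => ?_, fun _ => ⟨hi, hj⟩, fun h2 => ?_⟩ <;>
      (rw [h] at h2; exact absurd h2 (by decide))
  rcases Nat.eq_zero_or_pos k.val with hk | hk
  · have h := c3 hk hi hj
    refine ⟨fun h2 => ?_, fun h2 => ?_, fun _ => ⟨hi, hj, hk⟩⟩ <;>
      (rw [h] at h2; exact absurd h2 (by decide))
  · have h := c0 hext hi hj hk
    refine ⟨fun h2 => ?_, fun h2 => ?_, fun h2 => ?_⟩ <;>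
      (rw [h] at h2; exact absurd h2 (by decide))

/-- for any coloring f satisfying the bmf boundary conditions,
2^{-n}(1,1,0) is the unique boundary grid vertex adjacent to cubelets of
colors 1, 2 and 3. -/
theorem unique_trichromatic_boundary_vertex (n : ℕ) (hn : 1 ≤ n)
    (f : Fin (2 ^ n) → Fin (2 ^ n) → Fin (2 ^ n) → Fin 4)
    (hf : BMFBoundary n f) :
    (OnBoundary n 1 1 0 ∧
      HasColorAt n f 1 1 0 1 ∧ HasColorAt n f 1 1 0 2 ∧ HasColorAt n f 1 1 0 3) ∧
    ∀ a b c : ℕ, a ≤ 2 ^ n → b ≤ 2 ^ n → c ≤ 2 ^ n → OnBoundary n a b c →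
      HasColorAt n f a b c 1 → HasColorAt n f a b c 2 → HasColorAt n f a b c 3 →
      a = 1 ∧ b = 1 ∧ c = 0 := by
  have h2n : 2 ≤ 2 ^ n := by
    calc 2 = 2 ^ 1 := rfl
    _ ≤ 2 ^ n := Nat.pow_le_pow_right (by norm_num) hn
  have hpos : 0 < 2 ^ n := by omega
  set z : Fin (2 ^ n) := ⟨0, hpos⟩ with hz
  set o : Fin (2 ^ n) := ⟨1, by omega⟩ with ho
  constructor
  · refine ⟨by right; right; right; right; left; rfl, ?_, ?_, ?_⟩
    · exact ⟨z, z, z, Or.inr rfl, Or.inr rfl, Or.inl rfl, (hf z z z).1 rfl⟩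
    · exact ⟨o, z, z, Or.inl rfl, Or.inr rfl, Or.inl rfl, (hf o z z).2.1 rfl (by norm_num)⟩
    · exact ⟨o, o, z, Or.inl rfl, Or.inl rfl, Or.inl rfl,
        (hf o o z).2.2.1 rfl (by norm_num) (by norm_num)⟩
  · intro a b c ha hb hc hbd hc1 hc2 hc3
    obtain ⟨i1, j1, k1, hi1, hj1, hk1, hv1⟩ := hc1
    obtain ⟨i2, j2, k2, hi2, hj2, hk2, hv2⟩ := hc2
    obtain ⟨i3, j3, k3, hi3, hj3, hk3, hv3⟩ := hc3
    have e1 := ext_of_boundary n a b c i1 j1 k1 hi1 hj1 hk1 hbd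
    have e2 := ext_of_boundary n a b c i2 j2 k2 hi2 hj2 hk2 hbd
    have e3 := ext_of_boundary n a b c i3 j3 k3 hi3 hj3 hk3 hbd
    have g1 := (classify n f hf i1 j1 k1 e1).1 hv1
    have g2 := (classify n f hf i2 j2 k2 e2).2.1 hv2
    have g3 := (classify n f hf i3 j3 k3 e3).2.2 hv3
    unfold AdjIdx at hi1 hj1 hk1 hi2 hj2 hk2 hi3 hj3 hk3
    unfold OnBoundary at hbd
    obtain ⟨g2a, g2b⟩ := g2
    obtain ⟨g3a, g3b, g3c⟩ := g3
    omega
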